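/- arXiv:2104.12268 — 5 statements merged into one kernel-verified Lean document; each statement's English description precedes it below -/
import Mathlib

section
/- Let G be a finite simple graph and m ≥ 1 an integer such that P_DP(G,m) = P(G,m). Then P_DP(K_1 ∨ G, m+1) = P(K_1 ∨ G, m+1). -/
open SimpleGraph Finset

/-- A (standardized) `m`-fold cover of a graph `G`: the vertex set of the cover graph `H`
is `V × Fin m`, where the fiber (list) of a vertex `v` is `L v = {v} × Fin m`.
Every `m`-fold cover in the sense of Dvořák–Postle is isomorphic to one of this form. -/
structure DPCover {V : Type} (G : SimpleGraph V) (m : ℕ) where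
  /-- the cover graph -/
  H : SimpleGraph (V × Fin m)
  /-- each fiber induces a complete graph -/
  fiber_complete : ∀ (v : V) (i j : Fin m), i ≠ j → H.Adj (v, i) (v, j)
  /-- cross-edges only join fibers of adjacent vertices -/
  cross : ∀ (u v : V) (i j : Fin m), H.Adj (u, i) (v, j) → u = v ∨ G.Adj u v
  /-- the cross-edges between the fibers of two adjacent vertices form a matching -/
  matching : ∀ (u v : V), G.Adj u v → ∀ (i j j' : Fin m),
      H.Adj (u, i) (v, j) → H.Adj (u, i) (v, j') → j = j'

/-- `f` encodes an `(L,H)`-coloring of `G`, i.e. the set `{(v, f v) : v ∈ V}` is independent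
in the cover graph. -/
def DPCover.IsColoring {V : Type} {G : SimpleGraph V} {m : ℕ} (C : DPCover G m)
    (f : V → Fin m) : Prop :=
  ∀ u v : V, ¬ C.H.Adj (u, f u) (v, f v)

/-- `P_DP(G, (L,H))`: the number of `(L,H)`-colorings of `G`. -/
noncomputable def DPCover.count {V : Type} [Fintype V] {G : SimpleGraph V} {m : ℕ}
    (C : DPCover G m) : ℕ :=
  Nat.card { f : V → Fin m // C.IsColoring f }

/-- `N((v,j), (L,H))`: the number of `(L,H)`-colorings of `G` containing the vertex `(v, j)`. -/
noncomputable def DPCover.countAt {V : Type} [Fintype V] {G : SimpleGraph V} {m : ℕ}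
    (C : DPCover G m) (v : V) (j : Fin m) : ℕ :=
  Nat.card { f : V → Fin m // C.IsColoring f ∧ f v = j }

/-- The DP color function `P_DP(G, m)`. -/
noncomputable def PDP {V : Type} [Fintype V] (G : SimpleGraph V) (m : ℕ) : ℕ :=
  sInf { n : ℕ | ∃ C : DPCover G m, n = C.count }

/-- The chromatic polynomial `P(G, m)`: the number of proper colorings with colors in `Fin m`. -/
noncomputable def chromPoly {V : Type} [Fintype V] (G : SimpleGraph V) (m : ℕ) : ℕ :=
  Nat.card { f : V → Fin m // ∀ u v : V, G.Adj u v → f u ≠ f v }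

/-- The DP color function threshold `τ_DP(G)`: the least `N ≥ χ(G)` such that
`P_DP(G,m) = P(G,m)` for all `m ≥ N` (and `∞` if there is no such `N`). -/
noncomputable def tauDP {V : Type} [Fintype V] (G : SimpleGraph V) : ℕ∞ :=
  sInf { N : ℕ∞ | ∃ n : ℕ, N = (n : ℕ∞) ∧ G.chromaticNumber ≤ (n : ℕ∞) ∧
      ∀ m : ℕ, n ≤ m → PDP G m = chromPoly G m }

/-- The join `G ∨ K` of two vertex-disjoint graphs. -/
def joinG {α β : Type} (G : SimpleGraph α) (K : SimpleGraph β) : SimpleGraph (α ⊕ β) where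
  Adj x y := match x, y with
    | Sum.inl a, Sum.inl a' => G.Adj a a'
    | Sum.inr b, Sum.inr b' => K.Adj b b'
    | Sum.inl _, Sum.inr _ => True
    | Sum.inr _, Sum.inl _ => True
  symm := by
    constructor
    rintro (a | b) (a' | b') h
    · exact h.symm
    · trivial
    · trivial
    · exact h.symm
  loopless := by
    constructor
    rintro (a | b) h
    · exact G.loopless.irrefl a h
    · exact K.loopless.irrefl b h

/-- The vertex-gluing of graphs `G i` at the vertices `u i`: identify all the `u i` into a
single vertex (represented by `none`). -/
def VGlue {n : ℕ} {V : Fin n → Type} (G : ∀ i, SimpleGraph (V i)) (u : ∀ i, V i) :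
    SimpleGraph (Option (Σ i : Fin n, {x : V i // x ≠ u i})) where
  Adj a b := match a, b with
    | none, none => False
    | none, some ⟨i, x⟩ => (G i).Adj (u i) x.val
    | some ⟨i, x⟩, none => (G i).Adj x.val (u i)
    | some ⟨i, x⟩, some ⟨j, y⟩ => ∃ h : i = j, (G j).Adj (cast (congrArg V h) x.val) y.val
  symm := by
    constructor
    rintro (_ | ⟨i, x⟩) (_ | ⟨j, y⟩) h
    · exact h.elim
    · exact h.symm
    · exact h.symm
    · obtain ⟨rfl, h⟩ := h
      exact ⟨rfl, h.symm⟩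
  loopless := by
    constructor
    rintro (_ | ⟨i, x⟩) h
    · exact h
    · obtain ⟨h', h⟩ := h
      exact (G i).loopless.irrefl x.val h

/-- The `K_p`-gluing of graphs `G i`, each with a chosen `p`-clique `U i 0, …, U i (p-1)`:
the cliques are identified coordinatewise (the glued clique is `Sum.inl (Fin p)`). -/
def KGlue {n p : ℕ} {V : Fin n → Type} (G : ∀ i, SimpleGraph (V i))
    (U : ∀ i, Fin p → V i) :
    SimpleGraph ((Fin p) ⊕ (Σ i : Fin n, {x : V i // ∀ q, x ≠ U i q})) where
  Adj a b := match a, b with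
    | Sum.inl q, Sum.inl q' => q ≠ q'
    | Sum.inl q, Sum.inr ⟨i, x⟩ => (G i).Adj (U i q) x.val
    | Sum.inr ⟨i, x⟩, Sum.inl q => (G i).Adj x.val (U i q)
    | Sum.inr ⟨i, x⟩, Sum.inr ⟨j, y⟩ => ∃ h : i = j, (G j).Adj (cast (congrArg V h) x.val) y.val
  symm := by
    constructor
    rintro (q | ⟨i, x⟩) (q' | ⟨j, y⟩) h
    · exact h.symm
    · exact h.symm
    · exact h.symm
    · obtain ⟨rfl, h⟩ := h
      exact ⟨rfl, h.symm⟩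
  loopless := by
    constructor
    rintro (q | ⟨i, x⟩) h
    · exact h rfl
    · obtain ⟨h', h⟩ := h
      exact (G i).loopless.irrefl x.val h

/-- The disjoint union of a family of graphs. -/
def sigmaG {n : ℕ} {V : Fin n → Type} (G : ∀ i, SimpleGraph (V i)) :
    SimpleGraph (Σ i : Fin n, V i) where
  Adj a b := ∃ h : a.1 = b.1, (G b.1).Adj (cast (congrArg V h) a.2) b.2
  symm := by
    constructor
    rintro ⟨i, x⟩ ⟨j, y⟩ ⟨h1, h2⟩
    dsimp only at h1 h2 ⊢
    subst h1
    exact ⟨rfl, h2.symm⟩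
  loopless := by
    constructor
    rintro ⟨i, x⟩ ⟨h1, h2⟩
    dsimp only at h2
    exact (G i).loopless.irrefl x h2

/-- chordal: every cycle of length at least `4` has a chord, i.e. an edge of the graph
joining two vertices of the cycle that is not an edge of the cycle. -/
def IsChordal {V : Type} (G : SimpleGraph V) : Prop :=
  ∀ (v : V) (w : G.Walk v v), w.IsCycle → 4 ≤ w.length →
    ∃ x y, x ∈ w.support ∧ y ∈ w.support ∧ G.Adj x y ∧ s(x, y) ∉ w.edges


section AuxStmt7

/-- The trivial cover, whose colorings are precisely the proper colorings. -/
def trivCover {V : Type} (G : SimpleGraph V) (m : ℕ) : DPCover G m where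
  H := { Adj := fun p q => (p.1 = q.1 ∧ p.2 ≠ q.2) ∨ (G.Adj p.1 q.1 ∧ p.2 = q.2)
         symm := by
           constructor
           rintro ⟨u, i⟩ ⟨v, j⟩ (⟨h1, h2⟩ | ⟨h1, h2⟩)
           · exact Or.inl ⟨h1.symm, h2.symm⟩
           · exact Or.inr ⟨h1.symm, h2.symm⟩
         loopless := by
           constructor
           rintro ⟨u, i⟩ (⟨_, h2⟩ | ⟨h1, _⟩)
           · exact h2 rfl
           · exact G.loopless.irrefl u h1 }
  fiber_complete v i j hij := Or.inl ⟨rfl, hij⟩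
  cross u v i j hadj := hadj.imp And.left And.left
  matching u v huv i j j' h1 h2 := by
    rcases h1 with ⟨hh, _⟩ | ⟨_, h1⟩
    · exact absurd huv (by subst hh; exact G.loopless.irrefl u)
    rcases h2 with ⟨hh, _⟩ | ⟨_, h2⟩
    · exact absurd huv (by subst hh; exact G.loopless.irrefl u)
    exact h1.symm.trans h2

lemma trivCover_count {V : Type} [Fintype V] (G : SimpleGraph V) (m : ℕ) :
    (trivCover G m).count = chromPoly G m := by
  apply Nat.card_congr
  apply Equiv.subtypeEquivRight
  intro f
  constructor
  · intro hf u v hadj heq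
    exact hf u v (Or.inr ⟨hadj, heq⟩)
  · intro hf u v
    rintro (⟨rfl, hne⟩ | ⟨hadj, heq⟩)
    · exact hne rfl
    · exact hf u v hadj heq

lemma PDP_le_chromPoly {V : Type} [Fintype V] (G : SimpleGraph V) (m : ℕ) :
    PDP G m ≤ chromPoly G m :=
  Nat.sInf_le ⟨trivCover G m, (trivCover_count G m).symm⟩

noncomputable def unAbove {m : ℕ} (c x : Fin (m + 1)) (hx : x ≠ c) : Fin m :=
  (Fin.exists_succAbove_eq hx).choose

lemma succAbove_unAbove {m : ℕ} (c x : Fin (m + 1)) (hx : x ≠ c) :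
    c.succAbove (unAbove c x hx) = x :=
  (Fin.exists_succAbove_eq hx).choose_spec

lemma nat_card_sigma {ι : Type} [Fintype ι] (κ : ι → Type) [∀ i, Finite (κ i)] :
    Nat.card (Σ i, κ i) = ∑ i, Nat.card (κ i) := by
  classical
  letI : ∀ i, Fintype (κ i) := fun i => Fintype.ofFinite _
  simp only [Nat.card_eq_fintype_card]
  exact Fintype.card_sigma

lemma card_eq_sum_fibers {β : Type} [Fintype β] {n : ℕ} (P : (β → Fin n) → Prop) (w : β) :
    Nat.card {f : β → Fin n // P f}
      = ∑ j : Fin n, Nat.card {f : β → Fin n // P f ∧ f w = j} := by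
  rw [← nat_card_sigma]
  exact Nat.card_congr
    ⟨fun f => ⟨f.1 w, f.1, f.2, rfl⟩, fun x => ⟨x.2.1, x.2.2.1⟩,
      fun f => rfl, by rintro ⟨j, g, hg, rfl⟩; rfl⟩

lemma chromPoly_join_le {α : Type} [Fintype α] (G : SimpleGraph α) (m : ℕ) :
    chromPoly (joinG (⊤ : SimpleGraph (Fin 1)) G) (m + 1) ≤ (m + 1) * chromPoly G m := by
  classical
  let J := joinG (⊤ : SimpleGraph (Fin 1)) G
  let F : {f : Fin 1 ⊕ α → Fin (m + 1) // ∀ u v, J.Adj u v → f u ≠ f v} →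
      Fin (m + 1) × {g : α → Fin m // ∀ u v, G.Adj u v → g u ≠ g v} := fun f =>
    ⟨f.1 (Sum.inl 0),
     ⟨fun v => unAbove (f.1 (Sum.inl 0)) (f.1 (Sum.inr v)) (f.2 _ _ trivial),
      by
        intro u v huv heq
        have hsa := congrArg (Fin.succAbove (f.1 (Sum.inl 0))) heq
        rw [succAbove_unAbove, succAbove_unAbove] at hsa
        exact f.2 (Sum.inr u) (Sum.inr v) huv hsa⟩⟩
  have spec0 : ∀ f, (F f).1 = f.1 (Sum.inl 0) := fun _ => rfl
  have spec : ∀ f v, Fin.succAbove (F f).1 ((F f).2.1 v) = f.1 (Sum.inr v) :=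
    fun f v => succAbove_unAbove (f.1 (Sum.inl 0)) (f.1 (Sum.inr v)) (f.2 _ _ trivial)
  have hF : Function.Injective F := by
    intro f f' hff
    apply Subtype.ext
    funext x
    cases x with
    | inl a =>
      rw [Subsingleton.elim a (0 : Fin 1)]
      rw [← spec0 f, ← spec0 f', hff]
    | inr v =>
      rw [← spec f v, ← spec f' v, hff]
  have hcard := Nat.card_le_card_of_injective F hF
  rw [Nat.card_prod] at hcard
  unfold chromPoly
  simpa only [Nat.card_eq_fintype_card, Fintype.card_fin] using hcard

lemma join_cover_ge {α : Type} [Fintype α] (G : SimpleGraph α) (m : ℕ)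
    (hlow : ∀ C : DPCover G m, chromPoly G m ≤ C.count)
    (C : DPCover (joinG (⊤ : SimpleGraph (Fin 1)) G) (m + 1)) :
    chromPoly (joinG (⊤ : SimpleGraph (Fin 1)) G) (m + 1) ≤ C.count := by
  classical
  have step1 : ∀ j : Fin (m + 1), chromPoly G m ≤ C.countAt (Sum.inl 0) j := by
    intro j
    let b : α → Fin (m + 1) := fun v =>
      if hv : ∃ i, C.H.Adj (Sum.inl 0, j) (Sum.inr v, i) then hv.choose else j
    have hb : ∀ v i, ¬ C.H.Adj (Sum.inl 0, j) (Sum.inr v, (b v).succAbove i) := by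
      intro v i hadj
      have hv : ∃ i, C.H.Adj (Sum.inl 0, j) (Sum.inr v, i) := ⟨_, hadj⟩
      have hbv : b v = hv.choose := dif_pos hv
      have hmm := C.matching (Sum.inl 0) (Sum.inr v) trivial j hv.choose
        ((b v).succAbove i) hv.choose_spec hadj
      exact Fin.succAbove_ne (b v) i (hbv.trans hmm).symm
    let C' : DPCover G m :=
      { H := { Adj := fun p q => C.H.Adj (Sum.inr p.1, (b p.1).succAbove p.2)
                 (Sum.inr q.1, (b q.1).succAbove q.2)
               symm := ⟨fun p q hpq => C.H.adj_symm hpq⟩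
               loopless := ⟨fun p hp => C.H.loopless.irrefl _ hp⟩ }
        fiber_complete := fun v i i' hii =>
          C.fiber_complete (Sum.inr v) _ _
            (fun hE => hii (Fin.succAbove_right_injective hE))
        cross := by
          intro u v i i' hadj
          rcases C.cross _ _ _ _ hadj with heq | hadj'
          · exact Or.inl (Sum.inr_injective heq)
          · exact Or.inr hadj'
        matching := by
          intro u v huv i i1 i2 h1 h2
          exact Fin.succAbove_right_injective
            (C.matching (Sum.inr u) (Sum.inr v) huv _ _ _ h1 h2) }
    have hle : C'.count ≤ C.countAt (Sum.inl 0) j := by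
      let T : {f : α → Fin m // C'.IsColoring f} →
          {g : (Fin 1 ⊕ α) → Fin (m + 1) // C.IsColoring g ∧ g (Sum.inl 0) = j} := fun f =>
        ⟨Sum.elim (fun _ => j) (fun v => (b v).succAbove (f.1 v)),
         by
           constructor
           · intro x y
             cases x with
             | inl a =>
               cases y with
               | inl a' =>
                 rw [Subsingleton.elim a' a]
                 exact C.H.loopless.irrefl _
               | inr v =>
                 rw [Subsingleton.elim a (0 : Fin 1)]
                 exact hb v (f.1 v)
             | inr v =>
               cases y with
               | inl a =>
                 rw [Subsingleton.elim a (0 : Fin 1)]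
                 exact fun hadj => hb v (f.1 v) (C.H.adj_symm hadj)
               | inr v' => exact f.2 v v'
           · rfl⟩
      have hT : Function.Injective T := by
        intro f f' hff
        apply Subtype.ext
        funext v
        have := congrFun (congrArg Subtype.val hff) (Sum.inr v)
        exact Fin.succAbove_right_injective this
      exact Nat.card_le_card_of_injective T hT
    exact le_trans (hlow C') hle
  have step2 : C.count = ∑ j : Fin (m + 1), C.countAt (Sum.inl 0) j :=
    card_eq_sum_fibers C.IsColoring (Sum.inl 0)
  calc chromPoly (joinG (⊤ : SimpleGraph (Fin 1)) G) (m + 1)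
      ≤ (m + 1) * chromPoly G m := chromPoly_join_le G m
    _ = ∑ _j : Fin (m + 1), chromPoly G m := by
        rw [Finset.sum_const, Finset.card_univ, Fintype.card_fin, smul_eq_mul]
    _ ≤ ∑ j : Fin (m + 1), C.countAt (Sum.inl 0) j :=
        Finset.sum_le_sum (fun j _ => step1 j)
    _ = C.count := step2.symm

end AuxStmt7

theorem stmt_7 {α : Type} [Fintype α] (G : SimpleGraph α) (m : ℕ) (hm : 1 ≤ m)
    (h : PDP G m = chromPoly G m) :
    PDP (joinG (⊤ : SimpleGraph (Fin 1)) G) (m + 1)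
      = chromPoly (joinG (⊤ : SimpleGraph (Fin 1)) G) (m + 1) := by
  have hlow : ∀ C : DPCover G m, chromPoly G m ≤ C.count := by
    intro C
    have hx : PDP G m ≤ C.count := Nat.sInf_le ⟨C, rfl⟩
    rwa [h] at hx
  apply le_antisymm
  · exact PDP_le_chromPoly _ _
  · have hne : {n : ℕ | ∃ C : DPCover (joinG (⊤ : SimpleGraph (Fin 1)) G) (m + 1),
        n = C.count}.Nonempty := ⟨_, ⟨trivCover _ _, rfl⟩⟩
    obtain ⟨C, hC⟩ := Nat.sInf_mem hne
    unfold PDP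
    rw [hC]
    exact join_cover_ge G m hlow C
end

section
/- Let n ≥ 2, let G_1,…,G_n be vertex-disjoint finite simple graphs with chosen vertices u_i ∈ V(G_i), and let G be their vertex-gluing at u_1,…,u_n. Let m ≥ 1, let (L_i,H_i) be an m-fold cover of G_i for each i, and let f_i : L_1(u_1) → L_i(u_i) be a bijection for each i ∈ {2,…,n}. Then P_DP(G,m) ≤ Σ_{x ∈ L_1(u_1)} [ N(x,(L_1,H_1)) · ∏_{i=2}^{n} N(f_i(x),(L_i,H_i)) ]. -/
open SimpleGraph Finset

section Aux

variable {n : ℕ} {V : Fin n → Type} (G : ∀ i, SimpleGraph (V i)) (u : ∀ i, V i)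
  (m : ℕ) (C : ∀ i, DPCover (G i) m) (σ : ∀ _ : Fin n, Fin m ≃ Fin m)

def glueAdj : (Option (Σ i : Fin n, {x : V i // x ≠ u i})) × Fin m →
    (Option (Σ i : Fin n, {x : V i // x ≠ u i})) × Fin m → Prop := fun a b =>
  match a, b with
  | (none, j), (none, k) => j ≠ k
  | (none, j), (some ⟨i, x⟩, k) => (C i).H.Adj (u i, σ i j) (x.val, k)
  | (some ⟨i, x⟩, j), (none, k) => (C i).H.Adj (x.val, j) (u i, σ i k)
  | (some ⟨i, x⟩, j), (some ⟨i', y⟩, k) =>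
      ∃ h : i = i', (C i').H.Adj (cast (congrArg V h) x.val, j) (y.val, k)

def glueCover : DPCover (VGlue G u) m where
  H := { Adj := glueAdj G u m C σ
         symm := by
           constructor
           rintro ⟨(_ | ⟨i, x⟩), j⟩ ⟨(_ | ⟨i', y⟩), k⟩ h
           · exact h.symm
           · exact (SimpleGraph.adj_symm (C i').H h)
           · exact (SimpleGraph.adj_symm (C i).H h)
           · obtain ⟨rfl, h⟩ := h
             exact ⟨rfl, SimpleGraph.adj_symm (C i).H h⟩
         loopless := by
           constructor
           rintro ⟨(_ | ⟨i, x⟩), j⟩ h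
           · exact h rfl
           · obtain ⟨h', h⟩ := h
             exact (C i).H.loopless.irrefl _ h }
  fiber_complete := by
    rintro (_ | ⟨i, x⟩) j k hjk
    · exact hjk
    · exact ⟨rfl, (C i).fiber_complete x.val j k hjk⟩
  cross := by
    rintro (_ | ⟨i, x⟩) (_ | ⟨i', y⟩) j k h
    · exact Or.inl rfl
    · rcases (C i').cross _ _ _ _ h with h1 | h1
      · exact absurd h1.symm y.2
      · exact Or.inr h1
    · rcases (C i).cross _ _ _ _ h with h1 | h1
      · exact absurd h1 x.2
      · exact Or.inr h1
    · obtain ⟨rfl, h⟩ := h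
      rcases (C i).cross _ _ _ _ h with h1 | h1
      · exact Or.inl (by rw [Subtype.ext h1])
      · exact Or.inr ⟨rfl, h1⟩
  matching := by
    rintro (_ | ⟨i, x⟩) (_ | ⟨i', y⟩) hadj j k k' h1 h2
    · exact hadj.elim
    · exact (C i').matching _ _ hadj _ _ _ h1 h2
    · exact (σ i).injective ((C i).matching _ _ hadj _ _ _ h1 h2)
    · obtain ⟨rfl, h1⟩ := h1
      obtain ⟨h', h2⟩ := h2
      obtain ⟨_, hadj'⟩ := hadj
      exact (C i).matching _ _ hadj' _ _ _ h1 h2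

variable [∀ i, DecidableEq (V i)]

def glueEquiv :
    {f : Option (Σ i : Fin n, {x : V i // x ≠ u i}) → Fin m //
      (glueCover G u m C σ).IsColoring f} ≃
    Σ j : Fin m, ∀ i, {g : V i → Fin m // (C i).IsColoring g ∧ g (u i) = σ i j} where
  toFun f := ⟨f.1 none, fun i =>
    ⟨fun x => if h : x = u i then σ i (f.1 none) else f.1 (some ⟨i, ⟨x, h⟩⟩), by
      intro a b
      dsimp only
      by_cases ha : a = u i <;> by_cases hb : b = u i
      · subst ha; subst hb
        rw [dif_pos rfl]
        exact (C i).H.loopless.irrefl _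
      · subst ha
        rw [dif_pos rfl, dif_neg hb]
        exact f.2 none (some ⟨i, ⟨b, hb⟩⟩)
      · subst hb
        rw [dif_pos rfl, dif_neg ha]
        exact f.2 (some ⟨i, ⟨a, ha⟩⟩) none
      · rw [dif_neg ha, dif_neg hb]
        intro hadj
        exact f.2 (some ⟨i, ⟨a, ha⟩⟩) (some ⟨i, ⟨b, hb⟩⟩) ⟨rfl, hadj⟩, by
      dsimp only
      rw [dif_pos rfl]⟩⟩
  invFun p := ⟨fun a => match a with
    | none => p.1
    | some ⟨i, x⟩ => (p.2 i).1 x.val, by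
      rintro (_ | ⟨i, x⟩) (_ | ⟨i', y⟩)
      · exact fun h => h rfl
      · have h := (p.2 i').2.1 (u i') y.val
        rw [(p.2 i').2.2] at h
        exact h
      · have h := (p.2 i).2.1 x.val (u i)
        rw [(p.2 i).2.2] at h
        exact h
      · rintro ⟨rfl, hadj⟩
        exact (p.2 i).2.1 x.val y.val hadj⟩
  left_inv := by
    rintro ⟨f, hf⟩
    refine Subtype.ext (funext fun a => ?_)
    rcases a with _ | ⟨i, x⟩
    · rfl
    · exact dif_neg x.2
  right_inv := by
    rintro ⟨j, g⟩
    refine congrArg (Sigma.mk j) (funext fun i => Subtype.ext (funext fun x => ?_))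
    dsimp only
    by_cases hx : x = u i
    · rw [dif_pos hx]; subst hx; exact ((g i).2.2).symm
    · exact dif_neg hx

end Aux

theorem stmt_10 {n : ℕ} (hn : 2 ≤ n) {V : Fin n → Type}
    [∀ i, Fintype (V i)] [∀ i, DecidableEq (V i)]
    (G : ∀ i, SimpleGraph (V i)) (u : ∀ i, V i) (m : ℕ) (hm : 1 ≤ m)
    (C : ∀ i, DPCover (G i) m) (σ : ∀ _ : Fin n, Fin m ≃ Fin m)
    (hσ : σ ⟨0, by omega⟩ = Equiv.refl (Fin m)) :
    PDP (VGlue G u) m ≤ ∑ j : Fin m, ∏ i : Fin n, (C i).countAt (u i) (σ i j) := by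
  classical
  refine le_trans (Nat.sInf_le ⟨glueCover G u m C σ, rfl⟩) ?_
  show (glueCover G u m C σ).count ≤ _
  unfold DPCover.count
  rw [Nat.card_congr (glueEquiv G u m C σ)]
  letI : ∀ (j : Fin m) (i : Fin n),
      Fintype {g : V i → Fin m // (C i).IsColoring g ∧ g (u i) = σ i j} :=
    fun _ _ => Fintype.ofFinite _
  rw [Nat.card_eq_fintype_card, Fintype.card_sigma]
  refine le_of_eq (Finset.sum_congr rfl fun j _ => ?_)
  rw [Fintype.card_pi]
  exact Finset.prod_congr rfl fun i _ => by
    rw [DPCover.countAt, Nat.card_eq_fintype_card]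
end

section
/- Let k ≥ 1, let G = C_{2k+2}, and let (L,H) be a 2-fold cover of G that admits no (L,H)-coloring. Then the spanning subgraph of H whose edge set consists exactly of the cross-edges of H (the edges of H joining L(u) to L(v) for distinct vertices u, v of G) is a cycle on 4k+4 vertices. -/
open SimpleGraph Finset

/-- The spanning subgraph of the cover graph consisting exactly of the cross-edges. -/
def crossGraph {V : Type} {G : SimpleGraph V} {m : ℕ} (C : DPCover G m) :
    SimpleGraph (V × Fin m) where
  Adj a b := C.H.Adj a b ∧ a.1 ≠ b.1
  symm := ⟨fun _ _ h => ⟨h.1.symm, h.2.symm⟩⟩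
  loopless := ⟨fun _ h => h.2 rfl⟩


namespace DP12

open Fin.NatCast

variable {k : ℕ}

private instance instNZ : NeZero (2 * k + 2) := ⟨by omega⟩
private instance instNZ4 : NeZero (4 * k + 4) := ⟨by omega⟩

private lemma fin2_eq_add_one {a b : Fin 2} (h : a ≠ b) : a = b + 1 := by
  revert h; revert a b; decide

private lemma fin2_add_one_ne (a : Fin 2) : a + 1 ≠ a := by revert a; decide

private lemma fin2_add_one_add_one (a : Fin 2) : a + 1 + 1 = a := by revert a; decide

private lemma cyc_adj_iff {n : ℕ} [NeZero n] (hn : 2 ≤ n) {u v : Fin n} :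
    (cycleGraph n).Adj u v ↔ v = u + 1 ∨ u = v + 1 := by
  have h1 : (1 : Fin n).val = 1 := by
    rw [Fin.val_one']
    exact Nat.mod_eq_of_lt (by omega)
  rw [cycleGraph_adj']
  constructor
  · rintro (hh | hh)
    · right
      have h2 : u - v = 1 := Fin.ext (by rw [h1]; exact hh)
      rw [eq_add_of_sub_eq h2, add_comm]
    · left
      have h2 : v - u = 1 := Fin.ext (by rw [h1]; exact hh)
      rw [eq_add_of_sub_eq h2, add_comm]
  · rintro (rfl | rfl)
    · right
      have h2 : u + 1 - u = 1 := by abel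
      rw [h2, h1]
    · left
      have h2 : v + 1 - v = 1 := by abel
      rw [h2, h1]

private lemma cyc_adj_succ (v : Fin (2 * k + 2)) :
    (cycleGraph (2 * k + 2)).Adj v (v + 1) :=
  (cyc_adj_iff (by omega)).mpr (Or.inl rfl)

variable (C : DPCover (cycleGraph (2 * k + 2)) 2)

private lemma isColoring_of_succ (f : Fin (2 * k + 2) → Fin 2)
    (hf : ∀ u : Fin (2 * k + 2), ¬ C.H.Adj (u, f u) (u + 1, f (u + 1))) :
    C.IsColoring f := by
  intro u w hadj
  rcases eq_or_ne u w with rfl | hne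
  · exact C.H.loopless.irrefl _ hadj
  · rcases C.cross _ _ _ _ hadj with heq | hG
    · exact hne heq
    · rcases (cyc_adj_iff (by omega)).mp hG with h1 | h1
      · subst h1; exact hf u hadj
      · subst h1; exact hf w hadj.symm

open Classical in
private noncomputable def gfun (v : Fin (2 * k + 2)) (i : Fin 2) : ℕ → Fin 2
  | 0 => i
  | t + 1 =>
      if C.H.Adj (v - (t : Fin (2 * k + 2)) - 1, 0) (v - (t : Fin (2 * k + 2)), gfun v i t)
      then 1 else 0

private lemma gfun_step (v : Fin (2 * k + 2)) (i : Fin 2) (t : ℕ) :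
    ¬ C.H.Adj (v - (t : Fin (2 * k + 2)) - 1, gfun C v i (t + 1))
        (v - (t : Fin (2 * k + 2)), gfun C v i t) := by
  intro hadj
  by_cases h0 : C.H.Adj (v - (t : Fin (2 * k + 2)) - 1, 0)
      (v - (t : Fin (2 * k + 2)), gfun C v i t)
  · have hval : gfun C v i (t + 1) = 1 := by rw [gfun, if_pos h0]
    rw [hval] at hadj
    have hG : (cycleGraph (2 * k + 2)).Adj (v - (t : Fin (2 * k + 2)))
        (v - (t : Fin (2 * k + 2)) - 1) := by
      refine (cyc_adj_iff (by omega)).mpr (Or.inr ?_)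
      abel
    exact absurd (C.matching _ _ hG _ _ _ h0.symm hadj.symm) (by decide)
  · have hval : gfun C v i (t + 1) = 0 := by rw [gfun, if_neg h0]
    rw [hval] at hadj
    exact h0 hadj

private lemma exists_succ_adj (h : ∀ f : Fin (2 * k + 2) → Fin 2, ¬ C.IsColoring f)
    (v : Fin (2 * k + 2)) (i : Fin 2) : ∃ j, C.H.Adj (v, i) (v + 1, j) := by
  by_contra hno
  push_neg at hno
  apply h (fun x => gfun C v i (v - x).val)
  apply isColoring_of_succ
  intro u
  rcases eq_or_ne u v with rfl | hne
  · have h1 : u - u = (0 : Fin (2 * k + 2)) := sub_self u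
    have h2 : gfun C u i (u - u).val = i := by rw [h1]; rfl
    simp only [h2]
    exact fun hadj => hno _ hadj
  · have hvu : v - u ≠ 0 := fun h0 => hne (sub_eq_zero.mp h0).symm
    set d := (v - u).val with hd
    have hdne : d ≠ 0 := fun h0 => hvu (Fin.ext (by rw [Fin.val_zero]; exact h0))
    have hdlt : d < 2 * k + 2 := (v - u).isLt
    have hsub : v - (u + 1) = (v - u) - 1 := by abel
    have hval : (v - (u + 1)).val = d - 1 := by
      rw [hsub, Fin.coe_sub_one, if_neg hvu]
    have hcast : ((d - 1 : ℕ) : Fin (2 * k + 2)) = v - (u + 1) := by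
      apply Fin.ext
      rw [Fin.val_natCast, hval]
      exact Nat.mod_eq_of_lt (by omega)
    have hstep := gfun_step C v i (d - 1)
    rw [hcast] at hstep
    have h2 : v - (v - (u + 1)) = u + 1 := by abel
    have h3 : u + 1 - 1 = u := by abel
    rw [h2, h3] at hstep
    have h4 : d - 1 + 1 = d := by omega
    rw [h4] at hstep
    show ¬ C.H.Adj (u, gfun C v i (v - u).val) (u + 1, gfun C v i (v - (u + 1)).val)
    rw [← hd, hval]
    exact hstep

variable (h : ∀ f : Fin (2 * k + 2) → Fin 2, ¬ C.IsColoring f)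

private noncomputable def sig (v : Fin (2 * k + 2)) (i : Fin 2) : Fin 2 :=
  Classical.choose (exists_succ_adj C h v i)

private lemma sig_adj (v : Fin (2 * k + 2)) (i : Fin 2) :
    C.H.Adj (v, i) (v + 1, sig C h v i) :=
  Classical.choose_spec (exists_succ_adj C h v i)

private lemma adj_iff_sig (v : Fin (2 * k + 2)) (i j : Fin 2) :
    C.H.Adj (v, i) (v + 1, j) ↔ j = sig C h v i := by
  constructor
  · intro hj
    exact C.matching v (v + 1) (cyc_adj_succ v) i j _ hj (sig_adj C h v i)
  · rintro rfl
    exact sig_adj C h v i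

private lemma sig_inj (v : Fin (2 * k + 2)) : Function.Injective (sig C h v) := by
  intro a b hab
  have h1 := sig_adj C h v a
  have h2 := sig_adj C h v b
  rw [hab] at h1
  exact C.matching (v + 1) v (cyc_adj_succ v).symm _ a b h1.symm h2.symm

private lemma sig_add (v : Fin (2 * k + 2)) (x c : Fin 2) :
    sig C h v (x + c) = sig C h v x + c := by
  rcases (by decide : ∀ c : Fin 2, c = 0 ∨ c = 1) c with rfl | rfl
  · simp
  · apply fin2_eq_add_one
    intro hcon
    exact fin2_add_one_ne x (sig_inj C h v hcon)

private noncomputable def Ffun (a : Fin 2) : ℕ → Fin 2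
  | 0 => a
  | t + 1 => sig C h (t : Fin (2 * k + 2)) (Ffun a t) + 1

private lemma Ffun_succ (a : Fin 2) (t : ℕ) :
    Ffun C h a (t + 1) = sig C h (t : Fin (2 * k + 2)) (Ffun C h a t) + 1 := rfl

private lemma Ffun_ne (a : Fin 2) : Ffun C h a (2 * k + 2) ≠ a := by
  intro hF
  apply h (fun x => Ffun C h a x.val)
  apply isColoring_of_succ
  intro u hadj
  have hu1 := (adj_iff_sig C h u _ _).mp hadj
  have hone : (1 : Fin (2 * k + 2)).val = 1 := by
    rw [Fin.val_one']; exact Nat.mod_eq_of_lt (by omega)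
  have hvs : (u + 1).val = (u.val + 1) % (2 * k + 2) := by
    rw [Fin.val_add, hone]
  by_cases hlt : u.val + 1 < 2 * k + 2
  · rw [Nat.mod_eq_of_lt hlt] at hvs
    rw [hvs, Ffun_succ, Fin.cast_val_eq_self] at hu1
    exact fin2_add_one_ne _ hu1
  · have hu : u.val = 2 * k + 1 := by have := u.isLt; omega
    have hvs0 : (u + 1).val = 0 := by rw [hvs, hu, Nat.mod_self]
    rw [hvs0, hu] at hu1
    have hcast : ((2 * k + 1 : ℕ) : Fin (2 * k + 2)) = u := by
      apply Fin.ext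
      rw [Fin.val_natCast, hu]
      exact Nat.mod_eq_of_lt (by omega)
    have e0 : Ffun C h a 0 = a := rfl
    rw [e0] at hu1
    have e1 : Ffun C h a (2 * k + 2) = sig C h u (Ffun C h a (2 * k + 1)) + 1 := by
      rw [show (2 * k + 2) = (2 * k + 1) + 1 from rfl, Ffun_succ, hcast]
    rw [hF, ← hu1] at e1
    exact fin2_add_one_ne _ e1.symm

private lemma Ffun_top (a : Fin 2) : Ffun C h a (2 * k + 2) = a + 1 :=
  fin2_eq_add_one (Ffun_ne C h a)

private noncomputable def Wfun : ℕ → Fin (2 * k + 2) × Fin 2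
  | 0 => (0, 0)
  | t + 1 => ((Wfun t).1 + 1, sig C h ((Wfun t).1) ((Wfun t).2))

private lemma Wfun_succ (t : ℕ) :
    Wfun C h (t + 1) = ((Wfun C h t).1 + 1, sig C h ((Wfun C h t).1) ((Wfun C h t).2)) := rfl

private lemma Wfun_fst (t : ℕ) : (Wfun C h t).1 = (t : Fin (2 * k + 2)) := by
  induction t with
  | zero => simp [Wfun]
  | succ t ih => rw [Wfun_succ, ih]; simp

private lemma Wfun_snd (t : ℕ) : (Wfun C h t).2 = Ffun C h 0 t + (t : Fin 2) := by
  induction t with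
  | zero => simp [Wfun]; rfl
  | succ t ih =>
    rw [Wfun_succ]
    show sig C h ((Wfun C h t).1) ((Wfun C h t).2) = _
    rw [Wfun_fst, ih, sig_add]
    have h1 : sig C h (t : Fin (2 * k + 2)) (Ffun C h 0 t) = Ffun C h 0 (t + 1) + 1 := by
      rw [Ffun_succ, fin2_add_one_add_one]
    rw [h1]
    have h2 : ((t + 1 : ℕ) : Fin 2) = (t : Fin 2) + 1 := by
      rw [Nat.cast_add, Nat.cast_one]
    rw [h2]
    abel

private lemma Wfun_top : Wfun C h (2 * k + 2) = (0, 1) := by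
  have h1 := Wfun_fst C h (2 * k + 2)
  have h2 := Wfun_snd C h (2 * k + 2)
  rw [Ffun_top] at h2
  have h3 : ((2 * k + 2 : ℕ) : Fin (2 * k + 2)) = 0 := Fin.natCast_self _
  have h4 : ((2 * k + 2 : ℕ) : Fin 2) = 0 := by
    apply Fin.ext
    rw [Fin.val_natCast]
    omega
  rw [h3] at h1
  rw [h4] at h2
  have : (0 : Fin 2) + 1 + 0 = 1 := by decide
  rw [this] at h2
  exact Prod.ext h1 h2

private lemma Wfun_shift (t : ℕ) :
    Wfun C h (t + (2 * k + 2)) = ((Wfun C h t).1, (Wfun C h t).2 + 1) := by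
  induction t with
  | zero =>
    rw [Nat.zero_add, Wfun_top]
    rfl
  | succ t ih =>
    have he : t + 1 + (2 * k + 2) = (t + (2 * k + 2)) + 1 := by omega
    rw [he, Wfun_succ, ih, Wfun_succ]
    simp only []
    rw [sig_add]

private lemma Wfun_per (t : ℕ) : Wfun C h (t + (4 * k + 4)) = Wfun C h t := by
  have he : t + (4 * k + 4) = (t + (2 * k + 2)) + (2 * k + 2) := by omega
  rw [he, Wfun_shift, Wfun_shift, fin2_add_one_add_one]

private lemma Wfun_inj_lt {s t : ℕ} (hst : s < t) (ht : t < 4 * k + 4) :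
    Wfun C h s ≠ Wfun C h t := by
  intro heq
  have h1 : (s : Fin (2 * k + 2)) = (t : Fin (2 * k + 2)) := by
    rw [← Wfun_fst C h s, ← Wfun_fst C h t, heq]
  have h2 : s % (2 * k + 2) = t % (2 * k + 2) := by
    have := congrArg Fin.val h1
    rwa [Fin.val_natCast, Fin.val_natCast] at this
  have h3 : (2 * k + 2) ∣ (t - s) := (Nat.modEq_iff_dvd' (le_of_lt hst)).mp h2
  obtain ⟨c, hc⟩ := h3
  have hc1 : c = 1 := by
    rcases c with _ | _ | c
    · omega
    · rfl
    · exfalso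
      have hge : 4 * k + 4 ≤ (2 * k + 2) * (c + 2) := by
        calc 4 * k + 4 = (2 * k + 2) * 2 := by ring
        _ ≤ (2 * k + 2) * (c + 2) := Nat.mul_le_mul_left _ (by omega)
      rw [← hc] at hge
      omega
  rw [hc1, Nat.mul_one] at hc
  have hts : t = s + (2 * k + 2) := by omega
  rw [hts, Wfun_shift] at heq
  have := congrArg Prod.snd heq
  exact fin2_add_one_ne _ this.symm

private noncomputable def efun : Fin (4 * k + 4) → Fin (2 * k + 2) × Fin 2 :=
  fun s => Wfun C h s.val

private lemma efun_inj : Function.Injective (efun C h) := by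
  intro s t heq
  by_contra hne
  rcases lt_trichotomy s.val t.val with hlt | heqv | hlt
  · exact Wfun_inj_lt C h hlt t.isLt heq
  · exact hne (Fin.ext heqv)
  · exact Wfun_inj_lt C h hlt s.isLt heq.symm

private lemma efun_bij : Function.Bijective (efun C h) := by
  rw [Fintype.bijective_iff_injective_and_card]
  refine ⟨efun_inj C h, ?_⟩
  rw [Fintype.card_fin, Fintype.card_prod, Fintype.card_fin, Fintype.card_fin]
  ring

private lemma efun_succ (s : Fin (4 * k + 4)) :
    efun C h (s + 1) = Wfun C h (s.val + 1) := by
  have hone : (1 : Fin (4 * k + 4)).val = 1 := by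
    rw [Fin.val_one']; exact Nat.mod_eq_of_lt (by omega)
  have hvs : (s + 1).val = (s.val + 1) % (4 * k + 4) := by
    rw [Fin.val_add, hone]
  by_cases hlt : s.val + 1 < 4 * k + 4
  · show Wfun C h (s + 1).val = _
    rw [hvs, Nat.mod_eq_of_lt hlt]
  · have hs : s.val = 4 * k + 3 := by have := s.isLt; omega
    show Wfun C h (s + 1).val = _
    rw [hvs, hs, Nat.mod_self]
    have : (4 : ℕ) * k + 3 + 1 = 0 + (4 * k + 4) := by omega
    rw [this, Wfun_per]

private lemma self_ne_add_one (v : Fin (2 * k + 2)) : v ≠ v + 1 := by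
  intro hv
  have h1 : (1 : Fin (2 * k + 2)) = 0 := (left_eq_add.mp hv)
  have h2 := congrArg Fin.val h1
  rw [Fin.val_one', Fin.val_zero, Nat.mod_eq_of_lt (show 1 < 2 * k + 2 by omega)] at h2
  exact one_ne_zero h2

private lemma cross_adj_succ (m : ℕ) :
    (crossGraph C).Adj (Wfun C h m) (Wfun C h (m + 1)) := by
  rw [Wfun_succ]
  constructor
  · have := sig_adj C h ((Wfun C h m).1) ((Wfun C h m).2)
    simpa using this
  · exact self_ne_add_one _

private lemma succ_of_cross (a b : Fin (4 * k + 4))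
    (hH : C.H.Adj (efun C h a) (efun C h b))
    (h1 : (efun C h b).1 = (efun C h a).1 + 1) : b = a + 1 := by
  have hb2 : efun C h b = ((efun C h a).1 + 1, (efun C h b).2) := by
    rw [← h1]
  have hH2 : C.H.Adj ((efun C h a).1, (efun C h a).2)
      ((efun C h a).1 + 1, (efun C h b).2) := by
    rw [← hb2]; exact hH
  have hs : (efun C h b).2 = sig C h (efun C h a).1 (efun C h a).2 :=
    (adj_iff_sig C h _ _ _).mp hH2
  have hba : efun C h b = efun C h (a + 1) := by
    have he : efun C h b = ((efun C h a).1 + 1, sig C h (efun C h a).1 (efun C h a).2) := by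
      rw [← hs, ← h1]
    rw [he, efun_succ, Wfun_succ]
    rfl
  exact efun_inj C h hba

private lemma main_iff (a b : Fin (4 * k + 4)) :
    (crossGraph C).Adj (efun C h a) (efun C h b) ↔ (cycleGraph (4 * k + 4)).Adj a b := by
  constructor
  · rintro ⟨hH, hne⟩
    rcases C.cross _ _ _ _ hH with heq | hG
    · exact absurd heq hne
    · rcases (cyc_adj_iff (by omega)).mp hG with h1 | h1
      · exact (cyc_adj_iff (by omega)).mpr (Or.inl (succ_of_cross C h a b hH h1))
      · exact (cyc_adj_iff (by omega)).mpr (Or.inr (succ_of_cross C h b a hH.symm h1))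
  · intro hadj
    rcases (cyc_adj_iff (by omega)).mp hadj with h1 | h1
    · subst h1
      rw [efun_succ]
      exact cross_adj_succ C h a.val
    · subst h1
      rw [efun_succ]
      exact ((cross_adj_succ C h b.val)).symm

end DP12

theorem stmt_12 (k : ℕ) (hk : 1 ≤ k) (C : DPCover (cycleGraph (2 * k + 2)) 2)
    (h : ∀ f : Fin (2 * k + 2) → Fin 2, ¬ C.IsColoring f) :
    Nonempty (crossGraph C ≃g cycleGraph (4 * k + 4)) := by
  exact ⟨(SimpleGraph.Iso.symm
    ⟨Equiv.ofBijective (DP12.efun C h) (DP12.efun_bij C h),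
      fun {a b} => DP12.main_iff C h a b⟩)⟩
end

section
/- Let l ≥ 3, let G = C_l, let m ≥ 2, and let (L,H) be any m-fold cover of G. Then for every vertex v of G and every r ∈ L(v), the number of (L,H)-colorings of G containing r satisfies m · N(r,(L,H)) ≥ P_DP(G,m). -/
open SimpleGraph Finset

open Fin.CommRing Fin.NatCast


namespace DP13


open Classical in
/-- number of sequences `c : Fin (n+1) → Fin m` with `c 0 = a`, `c n = b`,
avoiding transitions per `T`. -/
noncomputable def pCount (m : ℕ) (T : ℕ → Fin m → Fin m → Prop) (a : Fin m) : ℕ → Fin m → ℕ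
  | 0, b => if a = b then 1 else 0
  | n+1, b => ∑ k : Fin m, if T n k b then pCount m T a n k else 0

/-- sequences on a path -/
def pathP {m : ℕ} (T : ℕ → Fin m → Fin m → Prop) (n : ℕ) (a b : Fin m)
    (c : Fin (n+1) → Fin m) : Prop :=
  c 0 = a ∧ c (Fin.last n) = b ∧ ∀ t : Fin n, T t.1 (c t.castSucc) (c t.succ)

lemma natCard_sigma {ι : Type} [Fintype ι] (f : ι → Type) [∀ a, Finite (f a)] :
    Nat.card ((a : ι) × f a) = ∑ a, Nat.card (f a) := by
  classical
  haveI : ∀ a, Fintype (f a) := fun a => Fintype.ofFinite _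
  simp [Nat.card_eq_fintype_card, Fintype.card_sigma]

lemma card_split {α : Type} [Finite α] {m : ℕ} (P : α → Fin m → Prop) :
    Nat.card {p : α × Fin m // P p.1 p.2} = ∑ k, Nat.card {x : α // P x k} := by
  classical
  have e : {p : α × Fin m // P p.1 p.2} ≃ (k : Fin m) × {x : α // P x k} :=
    ⟨fun p => ⟨p.1.2, p.1.1, p.2⟩, fun q => ⟨(q.2.1, q.1), q.2.2⟩,
     fun p => rfl, fun q => rfl⟩
  rw [Nat.card_congr e, natCard_sigma]

lemma pathP_card {m : ℕ} (T : ℕ → Fin m → Fin m → Prop) (n : ℕ) (a b : Fin m) :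
    Nat.card {c : Fin (n+1) → Fin m // pathP T n a b c} = pCount m T a n b := by
  classical
  induction n generalizing b with
  | zero =>
    rw [pCount]
    by_cases h : a = b
    · rw [if_pos h, Nat.card_eq_one_iff_unique]
      refine ⟨⟨?_⟩, ⟨⟨fun _ => a, rfl, h ▸ rfl, fun t => t.elim0⟩⟩⟩
      rintro ⟨c, hc⟩ ⟨c', hc'⟩
      apply Subtype.ext
      funext t
      rw [show t = 0 from Fin.ext (by omega)]
      exact hc.1.trans hc'.1.symm
    · rw [if_neg h, Nat.card_eq_zero]
      left
      constructor
      rintro ⟨c, h1, h2, _⟩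
      exact h (by rw [← h1, show (0 : Fin 1) = Fin.last 0 from rfl, h2])
  | succ n ih =>
    have e : {c : Fin (n+2) → Fin m // pathP T (n+1) a b c} ≃
        {p : (Fin (n+1) → Fin m) × Fin m // (pathP T n a p.2 p.1 ∧ T n p.2 b)} := by
      refine ⟨fun c => ⟨(fun t => c.1 t.castSucc, c.1 (Fin.last n).castSucc), ⟨?_, rfl, ?_⟩, ?_⟩,
        fun p => ⟨Fin.snoc p.1.1 b, ?_, ?_, ?_⟩, ?_, ?_⟩
      · simpa using c.2.1
      · intro t
        have := c.2.2.2 t.castSucc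
        simpa using this
      · have := c.2.2.2 (Fin.last n)
        simpa [c.2.2.1] using this
      · rw [show (0 : Fin (n+2)) = (0 : Fin (n+1)).castSucc from rfl, Fin.snoc_castSucc]
        exact p.2.1.1
      · simp
      · intro t
        refine Fin.lastCases ?_ ?_ t
        · simpa [Fin.snoc_castSucc, p.2.1.2.1] using p.2.2
        · intro s
          have := p.2.1.2.2 s
          rw [Fin.succ_castSucc, Fin.snoc_castSucc, Fin.snoc_castSucc]
          exact this
      · rintro ⟨c, hc⟩
        apply Subtype.ext
        funext t
        refine Fin.lastCases ?_ ?_ t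
        · simpa using hc.2.1.symm
        · intro s
          simp
      · rintro ⟨⟨c, k⟩, hc⟩
        apply Subtype.ext
        refine Prod.ext ?_ ?_
        · funext t
          simp
        · simpa using hc.1.2.1
    rw [Nat.card_congr e, card_split (fun x k => pathP T n a k x ∧ T n k b), pCount]
    refine Finset.sum_congr rfl (fun k _ => ?_)
    by_cases h : T n k b
    · rw [if_pos h, ← ih k]
      exact Nat.card_congr (Equiv.subtypeEquivRight (fun x => and_iff_left h))
    · rw [if_neg h, Nat.card_eq_zero]
      left
      exact ⟨fun x => h x.2.2⟩

def uw (m : ℕ) : ℕ → ℕ × ℕ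
  | 0 => (1, 0)
  | n+1 => ((m-1) * (uw m n).2, (uw m n).1 + (m-2) * (uw m n).2)

def compP {m : ℕ} (σ : ℕ → Equiv.Perm (Fin m)) : ℕ → Equiv.Perm (Fin m)
  | 0 => 1
  | n+1 => σ n * compP σ n

lemma pCount_perm {m : ℕ} (hm : 2 ≤ m) (σ : ℕ → Equiv.Perm (Fin m)) (a : Fin m) (n : ℕ)
    (b : Fin m) :
    pCount m (fun t i j => j ≠ σ t i) a n b =
      if b = compP σ n a then (uw m n).1 else (uw m n).2 := by
  classical
  induction n generalizing b with
  | zero =>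
    rw [pCount, compP, uw]
    by_cases h : a = b
    · rw [if_pos h, if_pos (by simpa using h.symm)]
    · rw [if_neg h, if_neg (by simpa using fun h' => h h'.symm)]
  | succ n ih =>
    set p := compP σ n a with hp
    set q := (σ n)⁻¹ b with hq
    set u := (uw m n).1
    set w := (uw m n).2
    rw [pCount]
    have step : (∑ k : Fin m, if k = q then 0 else if k = p then u else w)
        = if b = compP σ (n+1) a then (uw m (n+1)).1 else (uw m (n+1)).2 := ?_
    · refine Eq.trans (Finset.sum_congr rfl (fun k _ => ?_)) step
      by_cases hk : k = q
      · rw [if_pos hk, if_neg]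
        simp [hk, hq]
      · rw [if_neg hk, if_pos, ih k]
        intro hb
        exact hk (by rw [hq, hb, ← Equiv.Perm.mul_apply, inv_mul_cancel, Equiv.Perm.one_apply])
    rw [show (∑ k : Fin m, if k = q then 0 else if k = p then u else w)
        = ∑ k ∈ Finset.univ.erase q, (if k = q then 0 else if k = p then u else w) from
      (Finset.sum_erase _ (by simp)).symm]
    have herase : ∀ k ∈ Finset.univ.erase q,
        (if k = q then 0 else if k = p then u else w) = (if k = p then u else w) := by
      intro k hk
      rw [if_neg (Finset.mem_erase.mp hk).1]
    rw [Finset.sum_congr rfl herase]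
    have hcard : (Finset.univ.erase q).card = m - 1 := by
      rw [Finset.card_erase_of_mem (Finset.mem_univ q), Finset.card_univ, Fintype.card_fin]
    by_cases hpq : p = q
    · have hb : b = σ n (compP σ n a) := by
        rw [← hp, hpq, hq, ← Equiv.Perm.mul_apply, mul_inv_cancel, Equiv.Perm.one_apply]
      rw [compP, uw, if_pos (by simpa [Equiv.Perm.mul_apply] using hb)]
      have : ∀ k ∈ Finset.univ.erase q, (if k = p then u else w) = w := by
        intro k hk
        rw [if_neg (hpq ▸ (Finset.mem_erase.mp hk).1)]
      rw [Finset.sum_congr rfl this, Finset.sum_const, hcard, smul_eq_mul]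
    · have hb : ¬ b = σ n (compP σ n a) := by
        intro hb
        exact hpq (by rw [hq, hp, hb, ← Equiv.Perm.mul_apply, inv_mul_cancel, Equiv.Perm.one_apply])
      rw [compP, uw, if_neg (by simpa [Equiv.Perm.mul_apply] using hb)]
      have hpmem : p ∈ Finset.univ.erase q := Finset.mem_erase.mpr ⟨hpq, Finset.mem_univ p⟩
      rw [← Finset.add_sum_erase _ _ hpmem, if_pos rfl]
      have : ∀ k ∈ (Finset.univ.erase q).erase p, (if k = p then u else w) = w := by
        intro k hk
        rw [if_neg (Finset.mem_erase.mp hk).1]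
      rw [Finset.sum_congr rfl this, Finset.sum_const, Finset.card_erase_of_mem hpmem, hcard,
        smul_eq_mul]
      show u + (m - 1 - 1) * w = u + (m - 2) * w
      congr 2
/-- cyclic sequences with base point, as a subtype -/
def cycP {m : ℕ} (T : ℕ → Fin m → Fin m → Prop) (n : ℕ) (a : Fin m)
    (c : Fin (n+1) → Fin m) : Prop :=
  c 0 = a ∧ ∀ t : Fin (n+1), T t.1 (c t) (c (t+1))

lemma castSucc_add_one {n : ℕ} (s : Fin n) :
    (s.castSucc + 1 : Fin (n+1)) = s.succ := by
  have hn : 0 < n := s.pos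
  apply Fin.ext
  rw [Fin.add_def]
  simp only [Fin.val_one', Fin.coe_castSucc, Fin.val_succ]
  have h1 : (1 : ℕ) % (n+1) = 1 := Nat.mod_eq_of_lt (by omega)
  rw [h1]
  exact Nat.mod_eq_of_lt (by omega)

lemma cyc_equiv_path {m : ℕ} (T : ℕ → Fin m → Fin m → Prop) (n : ℕ) (a : Fin m) :
    Nat.card {c : Fin (n+1) → Fin m // cycP T n a c}
      = Nat.card {c : Fin (n+2) → Fin m // pathP T (n+1) a a c} := by
  apply Nat.card_congr
  refine ⟨fun c => ⟨Fin.snoc c.1 a, ?_, by simp, ?_⟩,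
    fun c => ⟨fun t => c.1 t.castSucc, ?_, ?_⟩, ?_, ?_⟩
  · rw [show (0 : Fin (n+2)) = (0 : Fin (n+1)).castSucc from rfl, Fin.snoc_castSucc]
    exact c.2.1
  · intro t
    refine Fin.lastCases ?_ ?_ t
    · have := c.2.2 (Fin.last n)
      rw [Fin.last_add_one] at this
      simpa [Fin.succ_last, c.2.1] using this
    · intro s
      have := c.2.2 s.castSucc
      rw [castSucc_add_one] at this
      rw [Fin.succ_castSucc, Fin.snoc_castSucc, Fin.snoc_castSucc]
      exact this
  · show c.1 (0 : Fin (n+1)).castSucc = a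
    rw [Fin.castSucc_zero]
    exact c.2.1
  · intro t
    refine Fin.lastCases ?_ ?_ t
    · rw [Fin.last_add_one]
      show T (Fin.last n).1 (c.1 (Fin.last n).castSucc) (c.1 (0 : Fin (n+1)).castSucc)
      have h := c.2.2.2 (Fin.last n)
      rw [Fin.succ_last, c.2.2.1] at h
      rw [Fin.castSucc_zero, c.2.1]
      exact h
    · intro s
      rw [castSucc_add_one]
      show T s.castSucc.1 (c.1 s.castSucc.castSucc) (c.1 s.succ.castSucc)
      have h := c.2.2.2 s.castSucc
      rw [Fin.succ_castSucc] at h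
      exact h
  · rintro ⟨c, hc⟩
    apply Subtype.ext
    funext t
    simp
  · rintro ⟨c, hc⟩
    apply Subtype.ext
    funext t
    refine Fin.lastCases ?_ ?_ t
    · simpa using hc.2.1.symm
    · intro s
      simp

lemma card_base_split {m n : ℕ} (Q : (Fin (n+1) → Fin m) → Prop) :
    Nat.card {c : Fin (n+1) → Fin m // Q c}
      = ∑ a : Fin m, Nat.card {c : Fin (n+1) → Fin m // c 0 = a ∧ Q c} := by
  classical
  have e : {c : Fin (n+1) → Fin m // Q c}
      ≃ (a : Fin m) × {c : Fin (n+1) → Fin m // c 0 = a ∧ Q c} := by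
    refine ⟨fun c => ⟨c.1 0, c.1, rfl, c.2⟩, fun p => ⟨p.2.1, p.2.2.2⟩, fun c => rfl, ?_⟩
    rintro ⟨a, ⟨c, h, hq⟩⟩
    subst h
    rfl
  rw [Nat.card_congr e]
  haveI : ∀ a : Fin m, Finite {c : Fin (n+1) → Fin m // c 0 = a ∧ Q c} :=
    fun a => Subtype.finite
  exact natCard_sigma _


section Covers

variable {l' m : ℕ}

lemma val_add_one_cases {k : ℕ} (x : Fin (k+2)) :
    ((x + 1 : Fin (k+2)).val = x.val + 1 ∧ x.val + 1 < k+2)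
      ∨ ((x + 1 : Fin (k+2)).val = 0 ∧ x.val = k+1) := by
  have h := x.isLt
  rw [Fin.add_def, Fin.val_one]
  by_cases hx : x.val = k+1
  · right
    rw [hx]
    exact ⟨Nat.mod_self _, rfl⟩
  · left
    refine ⟨?_, by omega⟩
    show (↑x + 1) % (k+2) = ↑x + 1
    exact Nat.mod_eq_of_lt (by omega)

lemma fin_ne_add_one {k : ℕ} (x : Fin (k+2)) : ¬ x = x + 1 := by
  intro h
  have hv := congrArg Fin.val h
  rcases val_add_one_cases x with ⟨h1, h2⟩ | ⟨h1, h2⟩ <;> omega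

lemma fin_two_cycle_false {k : ℕ} {x y : Fin (k+3)} (h1 : y = x + 1) (h2 : x = y + 1) :
    False := by
  have h3 : x = x + 1 + 1 := by
    rw [← h1, ← h2]
  have h4 : x = x + 2 := h3.trans (by ring)
  have hv0 := congrArg Fin.val h4
  rw [Fin.add_def, Fin.val_two] at hv0
  have hv : x.val = (x.val + 2) % (k+3) := hv0
  have hx := x.isLt
  rcases Nat.lt_or_ge (x.val + 2) (k+3) with h | h
  · rw [Nat.mod_eq_of_lt h] at hv
    omega
  · have hlt : x.val + 2 - (k+3) < k+3 := by omega
    rw [Nat.mod_eq_sub_mod (by omega), Nat.mod_eq_of_lt hlt] at hv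
    omega

/-- characterization of colorings of a cover of the cycle -/
lemma coloring_iff (C : DPCover (cycleGraph (l'+3)) m) (f : Fin (l'+3) → Fin m) :
    C.IsColoring f ↔ ∀ x : Fin (l'+3), ¬ C.H.Adj (x, f x) (x + 1, f (x + 1)) := by
  constructor
  · intro h x
    exact h x (x+1)
  · intro h u w hadj
    rcases C.cross u w _ _ hadj with rfl | hG
    · exact C.H.loopless.irrefl _ hadj
    · rw [cycleGraph_adj] at hG
      rcases hG with h1 | h1
    -- u - w = 1, so u = w + 1
      · have hu : u = w + 1 := by rw [← h1]; ring
        subst hu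
        exact h w hadj.symm
      · have hw : w = u + 1 := by rw [← h1]; ring
        subst hw
        exact h u hadj

lemma exists_perm_extend {m : ℕ} (B : Fin m → Fin m → Prop)
    (h1 : ∀ i j j', B i j → B i j' → j = j')
    (h2 : ∀ i i' j, B i j → B i' j → i = i') :
    ∃ σ : Equiv.Perm (Fin m), ∀ i j, B i j → σ i = j := by
  classical
  refine ⟨Equiv.extendSubtype
    ({ toFun := fun i => ⟨Classical.choose i.2, i.1, Classical.choose_spec i.2⟩
       invFun := fun j => ⟨Classical.choose j.2, j.1, Classical.choose_spec j.2⟩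
       left_inv := by
         rintro ⟨i, hi⟩
         apply Subtype.ext
         exact h2 _ _ _
           (Classical.choose_spec (⟨i, Classical.choose_spec hi⟩ :
             ∃ i', B i' (Classical.choose hi))) (Classical.choose_spec hi)
       right_inv := by
         rintro ⟨j, hj⟩
         apply Subtype.ext
         exact h1 _ _ _
           (Classical.choose_spec (⟨j, Classical.choose_spec hj⟩ :
             ∃ j', B (Classical.choose hj) j')) (Classical.choose_spec hj) } :
      {i : Fin m // ∃ j, B i j} ≃ {j : Fin m // ∃ i, B i j}), ?_⟩
  intro i j hBij
  have hpi : ∃ j', B i j' := ⟨j, hBij⟩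
  rw [Equiv.extendSubtype_apply_of_mem _ i hpi]
  show Classical.choose hpi = j
  exact h1 _ _ _ (Classical.choose_spec hpi) hBij

/-- the cover of the cycle given by permutations on each edge (edge `(x, x+1)`
gets the permutation `τ (x - v)`). -/
def permCover (v : Fin (l'+3)) (τ : Fin (l'+3) → Equiv.Perm (Fin m)) :
    DPCover (cycleGraph (l'+3)) m where
  H := { Adj := fun p q => (p.1 = q.1 ∧ p.2 ≠ q.2) ∨
           (q.1 = p.1 + 1 ∧ q.2 = τ (p.1 - v) p.2) ∨
           (p.1 = q.1 + 1 ∧ p.2 = τ (q.1 - v) q.2),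
         symm := by
           constructor
           rintro p q (⟨h1, h2⟩ | ⟨h1, h2⟩ | ⟨h1, h2⟩)
           · exact Or.inl ⟨h1.symm, h2.symm⟩
           · exact Or.inr (Or.inr ⟨h1, h2⟩)
           · exact Or.inr (Or.inl ⟨h1, h2⟩)
         loopless := by
           constructor
           rintro p (⟨h1, h2⟩ | ⟨h1, h2⟩ | ⟨h1, h2⟩)
           · exact h2 rfl
           · exact fin_ne_add_one p.1 h1
           · exact fin_ne_add_one p.1 h1 }
  fiber_complete := fun w i j h => Or.inl ⟨rfl, h⟩
  cross := by
    rintro u w i j (⟨h1, h2⟩ | ⟨h1, h2⟩ | ⟨h1, h2⟩) <;> dsimp only at h1 h2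
    · exact Or.inl h1
    · refine Or.inr (cycleGraph_adj.mpr (Or.inr ?_))
      rw [h1]
      ring
    · refine Or.inr (cycleGraph_adj.mpr (Or.inl ?_))
      rw [h1]
      ring
  matching := by
    rintro u w huw i j j' had1 had2
    have hne : u ≠ w := (cycleGraph (l'+3)).ne_of_adj huw
    rcases had1 with ⟨h1, h2⟩ | ⟨h1, h2⟩ | ⟨h1, h2⟩ <;>
      rcases had2 with ⟨g1, g2⟩ | ⟨g1, g2⟩ | ⟨g1, g2⟩ <;>
      dsimp only at h1 h2 g1 g2
    · exact absurd h1 hne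
    · exact absurd h1 hne
    · exact absurd h1 hne
    · exact absurd g1 hne
    · exact h2.trans g2.symm
    · exact (fin_two_cycle_false h1 g1).elim
    · exact absurd g1 hne
    · exact (fin_two_cycle_false g1 h1).elim
    · exact (τ (w - v)).injective (h2.symm.trans g2)

lemma permCover_coloring_iff (v : Fin (l'+3)) (τ : Fin (l'+3) → Equiv.Perm (Fin m))
    (f : Fin (l'+3) → Fin m) :
    (permCover v τ).IsColoring f ↔ ∀ x : Fin (l'+3), f (x + 1) ≠ τ (x - v) (f x) := by
  constructor
  · intro h x heq
    exact h x (x+1) (Or.inr (Or.inl ⟨rfl, heq⟩))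
  · intro h u w hadj
    rcases hadj with ⟨h1, h2⟩ | ⟨h1, h2⟩ | ⟨h1, h2⟩
    · dsimp at h1 h2
      subst h1
      exact h2 rfl
    · dsimp at h1 h2
      subst h1
      exact h u h2
    · dsimp at h1 h2
      subst h1
      exact h w h2

end Covers

section Main

variable {l' m : ℕ}

lemma compP_one (n : ℕ) : compP (fun _ => (1 : Equiv.Perm (Fin m))) n = 1 := by
  induction n with
  | zero => rfl
  | succ n ih => rw [compP, ih, one_mul]

lemma permCover_count (v : Fin (l'+3)) (τ : Fin (l'+3) → Equiv.Perm (Fin m)) :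
    (permCover v τ).count
      = ∑ a : Fin m, pCount m (fun t i j => j ≠ τ (↑t : Fin (l'+3)) i) a (l'+3) a := by
  classical
  have e1 : {f : Fin (l'+3) → Fin m // (permCover v τ).IsColoring f}
      ≃ {c : Fin (l'+3) → Fin m //
          ∀ t : Fin (l'+3), (fun (t : ℕ) (i j : Fin m) => j ≠ τ (↑t : Fin (l'+3)) i)
            t.1 (c t) (c (t+1))} := by
    refine ⟨fun f => ⟨fun t => f.1 (v + t), ?_⟩, fun c => ⟨fun x => c.1 (x - v), ?_⟩, ?_, ?_⟩
    · intro t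
      show f.1 (v + (t + 1)) ≠ τ (↑t.1 : Fin (l'+3)) (f.1 (v + t))
      rw [Fin.cast_val_eq_self, ← add_assoc]
      have h := (permCover_coloring_iff v τ f.1).mp f.2 (v + t)
      rwa [add_sub_cancel_left] at h
    · rw [permCover_coloring_iff]
      intro x
      show c.1 (x + 1 - v) ≠ τ (x - v) (c.1 (x - v))
      have h : c.1 ((x - v) + 1) ≠ τ (↑(x - v).1 : Fin (l'+3)) (c.1 (x - v)) := c.2 (x - v)
      rw [Fin.cast_val_eq_self] at h
      have harr : x + 1 - v = (x - v) + 1 := by ring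
      rw [harr]
      exact h
    · rintro ⟨f, hf⟩
      apply Subtype.ext
      funext x
      show f (v + (x - v)) = f x
      congr 1
      ring
    · rintro ⟨c, hc⟩
      apply Subtype.ext
      funext t
      show c (v + t - v) = c t
      congr 1
      ring
  show Nat.card {f : Fin (l'+3) → Fin m // (permCover v τ).IsColoring f} = _
  rw [Nat.card_congr e1,
    card_base_split (fun c => ∀ t : Fin (l'+3),
      (fun (t : ℕ) (i j : Fin m) => j ≠ τ (↑t : Fin (l'+3)) i) t.1 (c t) (c (t+1)))]
  refine Finset.sum_congr rfl (fun a _ => ?_)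
  rw [show ({c : Fin (l'+3) → Fin m // c 0 = a ∧ ∀ t : Fin (l'+3),
      (fun (t : ℕ) (i j : Fin m) => j ≠ τ (↑t : Fin (l'+3)) i) t.1 (c t) (c (t+1))})
    = {c : Fin (l'+3) → Fin m //
        cycP (fun (t : ℕ) (i j : Fin m) => j ≠ τ (↑t : Fin (l'+3)) i) (l'+2) a c} from rfl,
    cyc_equiv_path, pathP_card]

end Main

end DP13


theorem stmt_13 (l : ℕ) (hl : 3 ≤ l) (m : ℕ) (hm : 2 ≤ m)
    (C : DPCover (cycleGraph l) m) (v : Fin l) (r : Fin m) :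
    PDP (cycleGraph l) m ≤ m * C.countAt v r := by
  classical
  obtain ⟨l', rfl⟩ : ∃ l', l = l' + 3 := ⟨l - 3, by omega⟩
  -- the partial matchings of C along the cycle, starting at v
  set B : Fin (l'+3) → Fin m → Fin m → Prop :=
    fun t i j => C.H.Adj (v + t, i) (v + t + 1, j) with hB
  have hGadj : ∀ t : Fin (l'+3), (cycleGraph (l'+3)).Adj (v + t) (v + t + 1) := by
    intro t
    refine cycleGraph_adj.mpr (Or.inr ?_)
    ring
  have hBex : ∀ t : Fin (l'+3), ∃ σ : Equiv.Perm (Fin m), ∀ i j, B t i j → σ i = j := by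
    intro t
    apply DP13.exists_perm_extend
    · intro i j j' h h'
      exact C.matching _ _ (hGadj t) i j j' h h'
    · intro i i' j h h'
      exact C.matching _ _ (hGadj t).symm j i i' h.symm h'.symm
  choose σP hσP using hBex
  set T : ℕ → Fin m → Fin m → Prop := fun t i j => j ≠ σP (↑t : Fin (l'+3)) i with hT
  -- the count of colorings of C with value r at v is at least pCount
  have key1 : DP13.pCount m T r (l'+3) r ≤ C.countAt v r := by
    rw [← DP13.pathP_card T (l'+3) r r, ← DP13.cyc_equiv_path T (l'+2) r]
    refine Nat.card_le_card_of_injective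
      (fun c => (⟨fun x => c.1 (x - v), ?_, ?_⟩ :
        {f : Fin (l'+3) → Fin m // C.IsColoring f ∧ f v = r})) ?_
    · rw [DP13.coloring_iff]
      intro x hadj
      have harr : x + 1 - v = (x - v) + 1 := by ring
      have hx : x = v + (x - v) := by ring
      have hBx : B (x - v) (c.1 (x - v)) (c.1 ((x - v) + 1)) := by
        rw [hB]
        rw [harr] at hadj
        convert hadj using 3 <;> rw [← hx]
      have := hσP (x - v) _ _ hBx
      have hc : c.1 ((x - v) + 1)
          ≠ σP ((((x - v) : Fin (l'+3)).1 : ℕ) : Fin (l'+3)) (c.1 (x - v)) := c.2.2 (x - v)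
      rw [Fin.cast_val_eq_self] at hc
      exact hc this.symm
    · show c.1 (v - v) = r
      rw [sub_self]
      exact c.2.1
    · intro c c' hcc
      apply Subtype.ext
      funext t
      have := congrFun (congrArg Subtype.val hcc) (v + t)
      simpa [add_sub_cancel_left] using this
  -- value of pCount via the permutation extension
  have val : DP13.pCount m T r (l'+3) r
      = if r = DP13.compP (fun t => σP (↑t : Fin (l'+3))) (l'+3) r
        then (DP13.uw m (l'+3)).1 else (DP13.uw m (l'+3)).2 :=
    DP13.pCount_perm (by omega) (fun t => σP (↑t : Fin (l'+3))) r (l'+3) r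
  by_cases hfix : r = DP13.compP (fun t => σP (↑t : Fin (l'+3))) (l'+3) r
  · -- use the identity cover
    have hcnt : (DP13.permCover v (fun _ => (1 : Equiv.Perm (Fin m)))).count
        = m * (DP13.uw m (l'+3)).1 := by
      rw [DP13.permCover_count]
      have : ∀ a : Fin m, DP13.pCount m
          (fun t i j => j ≠ (fun (_ : Fin (l'+3)) => (1 : Equiv.Perm (Fin m))) ↑t i)
          a (l'+3) a = (DP13.uw m (l'+3)).1 := by
        intro a
        rw [DP13.pCount_perm (by omega) (fun _ => 1) a (l'+3) a, DP13.compP_one,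
          if_pos (by simp)]
      rw [Finset.sum_congr rfl (fun a _ => this a), Finset.sum_const, Finset.card_univ,
        Fintype.card_fin, smul_eq_mul]
    calc PDP (cycleGraph (l'+3)) m
        ≤ (DP13.permCover v (fun _ => (1 : Equiv.Perm (Fin m)))).count :=
          Nat.sInf_le ⟨_, rfl⟩
      _ = m * (DP13.uw m (l'+3)).1 := hcnt
      _ = m * DP13.pCount m T r (l'+3) r := by rw [val, if_pos hfix]
      _ ≤ m * C.countAt v r := Nat.mul_le_mul_left m key1
  · -- use the shifted cover
    set ρ : Equiv.Perm (Fin m) := finRotate m with hρ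
    set τ : Fin (l'+3) → Equiv.Perm (Fin m) :=
      fun t => if t = Fin.last (l'+2) then ρ else 1 with hτ
    have hcompn : ∀ n : ℕ, n ≤ l' + 2 → DP13.compP (fun t => τ (↑t : Fin (l'+3))) n = 1 := by
      intro n hn
      induction n with
      | zero => rfl
      | succ k ih =>
        rw [DP13.compP, ih (by omega)]
        rw [hτ]
        simp only []
        rw [if_neg, one_mul]
        intro hc
        have := congrArg Fin.val hc
        rw [Fin.val_cast_of_lt (by omega : k < l'+3)] at this
        simp [Fin.val_last] at this
        omega
    have hcomp : DP13.compP (fun t => τ (↑t : Fin (l'+3))) (l'+3) = ρ := by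
      rw [DP13.compP, hcompn (l'+2) le_rfl, mul_one]
      have : ((l'+2 : ℕ) : Fin (l'+3)) = Fin.last (l'+2) := by
        apply Fin.ext
        rw [Fin.val_cast_of_lt (by omega : l'+2 < l'+3), Fin.val_last]
      rw [hτ]
      simp [this]
    have hnofix : ∀ a : Fin m, ¬ a = ρ a := by
      intro a ha
      obtain ⟨m'', rfl⟩ : ∃ m'', m = m'' + 2 := ⟨m - 2, by omega⟩
      rw [hρ, finRotate_succ_apply] at ha
      exact DP13.fin_ne_add_one a ha
    have hcnt : (DP13.permCover v τ).count = m * (DP13.uw m (l'+3)).2 := by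
      rw [DP13.permCover_count]
      have : ∀ a : Fin m, DP13.pCount m
          (fun t i j => j ≠ τ (↑t : Fin (l'+3)) i) a (l'+3) a = (DP13.uw m (l'+3)).2 := by
        intro a
        rw [DP13.pCount_perm (by omega) (fun t => τ (↑t : Fin (l'+3))) a (l'+3) a, hcomp,
          if_neg (hnofix a)]
      rw [Finset.sum_congr rfl (fun a _ => this a), Finset.sum_const, Finset.card_univ,
        Fintype.card_fin, smul_eq_mul]
    calc PDP (cycleGraph (l'+3)) m
        ≤ (DP13.permCover v τ).count := Nat.sInf_le ⟨_, rfl⟩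
      _ = m * (DP13.uw m (l'+3)).2 := hcnt
      _ = m * DP13.pCount m T r (l'+3) r := by rw [val, if_neg hfix]
      _ ≤ m * C.countAt v r := Nat.mul_le_mul_left m key1
end

section
/- Let n ≥ 2, let k_1,…,k_n be integers with each k_i ≥ 3 such that there exist distinct indices a, b ∈ {1,…,n} with k_a = k_b = 4, let G be the disjoint union of the cycles C_{k_1},…,C_{k_n}, and let M = K_1 ∨ G. Then P_DP(M,4) < P(M,4). Consequently, τ_DP(M) ≥ 5. -/
open SimpleGraph Finset

/-- The cone (join with `K_1`) of the disjoint union of the cycles `C_{k i}`. -/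
def coneCycles {n : ℕ} (k : Fin n → ℕ) :
    SimpleGraph (Fin 1 ⊕ Σ i : Fin n, Fin (k i)) :=
  joinG (⊤ : SimpleGraph (Fin 1)) (sigmaG fun i => SimpleGraph.cycleGraph (k i))


section AuxDP
variable {n : ℕ} (k : Fin n → ℕ) (a b : Fin n)

/-- twist permutations attached to oriented pairs of vertices -/
def twf : (Fin 1 ⊕ Σ i : Fin n, Fin (k i)) → (Fin 1 ⊕ Σ i : Fin n, Fin (k i)) →
    Equiv.Perm (Fin 4) := fun u v =>
  match u, v with
  | Sum.inr ⟨i, x⟩, Sum.inr ⟨j, y⟩ =>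
    if i = a ∧ j = a ∧ ((x.val = 0 ∧ y.val = 1) ∨ (x.val = 1 ∧ y.val = 0)) then Equiv.swap 0 1
    else if i = b ∧ j = b ∧ ((x.val = 0 ∧ y.val = 1) ∨ (x.val = 1 ∧ y.val = 0)) then Equiv.swap 2 3
    else 1
  | _, _ => 1

lemma twf_comm (u v) : twf k a b u v = twf k a b v u := by
  rcases u with z | ⟨i, x⟩ <;> rcases v with z' | ⟨j, y⟩ <;> simp only [twf]
  have flip : ∀ c : Fin n,
      (i = c ∧ j = c ∧ (x.val = 0 ∧ y.val = 1 ∨ x.val = 1 ∧ y.val = 0)) =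
      (j = c ∧ i = c ∧ (y.val = 0 ∧ x.val = 1 ∨ y.val = 1 ∧ x.val = 0)) := by
    intro c
    apply propext
    constructor <;> rintro ⟨h1, h2, h3 | h3⟩
    · exact ⟨h2, h1, Or.inr ⟨h3.2, h3.1⟩⟩
    · exact ⟨h2, h1, Or.inl ⟨h3.2, h3.1⟩⟩
    · exact ⟨h2, h1, Or.inr ⟨h3.2, h3.1⟩⟩
    · exact ⟨h2, h1, Or.inl ⟨h3.2, h3.1⟩⟩
  simp only [flip a, flip b]

lemma twf_invol (u v) (t : Fin 4) : twf k a b u v (twf k a b u v t) = t := by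
  rcases u with z | ⟨i, x⟩ <;> rcases v with z' | ⟨j, y⟩ <;> simp only [twf] <;>
    try simp
  split_ifs <;> simp

lemma twf_inl_left (z w) : twf k a b (Sum.inl z) w = 1 := by
  rcases w with z' | ⟨j, y⟩ <;> rfl

lemma twf_inl_right (z w) : twf k a b w (Sum.inl z) = 1 := by
  rcases w with z' | ⟨j, y⟩ <;> rfl

/-- the twisted cover -/
def badCover : DPCover (coneCycles k) 4 where
  H := { Adj := fun p q =>
           (p.1 = q.1 ∧ p.2 ≠ q.2) ∨ ((coneCycles k).Adj p.1 q.1 ∧ q.2 = twf k a b p.1 q.1 p.2)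
         symm := by
           constructor
           rintro ⟨u, i⟩ ⟨v, j⟩ (⟨h1, h2⟩ | ⟨h1, h2⟩)
           · exact Or.inl ⟨h1.symm, h2.symm⟩
           · refine Or.inr ⟨h1.symm, ?_⟩
             dsimp only at h2 ⊢
             rw [twf_comm k a b v u, h2]
             exact (twf_invol k a b u v i).symm
         loopless := by
           constructor
           rintro ⟨u, i⟩ (⟨h1, h2⟩ | ⟨h1, h2⟩)
           · exact h2 rfl
           · exact (coneCycles k).loopless.irrefl u h1 }
  fiber_complete := fun v i j hij => Or.inl ⟨rfl, hij⟩
  cross := by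
    rintro u v i j (⟨h1, _⟩ | ⟨h1, _⟩)
    · exact Or.inl h1
    · exact Or.inr h1
  matching := by
    rintro u v _ i j j' (⟨h1, _⟩ | ⟨_, h2⟩) hj'
    · exact absurd h1 (by rintro rfl; exact ((coneCycles k).loopless.irrefl u ‹_›))
    · rcases hj' with ⟨h1', _⟩ | ⟨_, h2'⟩
      · exact absurd h1' (by rintro rfl; exact ((coneCycles k).loopless.irrefl u ‹_›))
      · dsimp only at h2 h2'
        rw [h2, h2']

lemma badCover_count :
    (badCover k a b).count =
      Nat.card {f : (Fin 1 ⊕ Σ i : Fin n, Fin (k i)) → Fin 4 //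
        ∀ u v, (coneCycles k).Adj u v → f v ≠ twf k a b u v (f u)} := by
  apply Nat.card_congr
  apply Equiv.subtypeEquivRight
  intro f
  constructor
  · intro hf u v hadj heq
    exact hf u v (Or.inr ⟨hadj, heq⟩)
  · rintro h u v (⟨rfl, hne⟩ | ⟨hadj, heq⟩)
    · exact hne rfl
    · exact h u v hadj heq

/-- decompose colorings by the hub color and the cycles -/
def decompEquiv (t : (Fin 1 ⊕ Σ i : Fin n, Fin (k i)) → (Fin 1 ⊕ Σ i : Fin n, Fin (k i)) →
      Equiv.Perm (Fin 4))
    (ht1 : ∀ z w, t (Sum.inl z) w = 1) (ht2 : ∀ z w, t w (Sum.inl z) = 1) :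
    {f : (Fin 1 ⊕ Σ i : Fin n, Fin (k i)) → Fin 4 //
      ∀ u v, (coneCycles k).Adj u v → f v ≠ t u v (f u)} ≃
    Σ c : Fin 4, Π i : Fin n, {g : Fin (k i) → Fin 4 //
      (∀ x, g x ≠ c) ∧ ∀ x y, (SimpleGraph.cycleGraph (k i)).Adj x y →
        g y ≠ t (Sum.inr ⟨i, x⟩) (Sum.inr ⟨i, y⟩) (g x)} where
  toFun f := ⟨f.1 (Sum.inl 0), fun i => ⟨fun x => f.1 (Sum.inr ⟨i, x⟩), by
    constructor
    · intro x heq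
      have := f.2 (Sum.inl 0) (Sum.inr ⟨i, x⟩) trivial
      rw [ht1] at this
      exact this heq
    · intro x y hxy heq
      have := f.2 (Sum.inr ⟨i, x⟩) (Sum.inr ⟨i, y⟩) ⟨rfl, hxy⟩
      exact this heq⟩⟩
  invFun cg := ⟨fun v => match v with
    | Sum.inl _ => cg.1
    | Sum.inr ⟨i, x⟩ => (cg.2 i).1 x, by
    rintro (z | ⟨i, x⟩) (z' | ⟨j, y⟩) hadj
    · exact absurd (Subsingleton.elim z z') hadj
    · rw [ht1]
      exact (cg.2 j).2.1 y
    · rw [ht2]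
      exact fun h => (cg.2 i).2.1 x h.symm
    · obtain ⟨h1, h2⟩ := hadj
      dsimp only at h1 h2
      subst h1
      exact (cg.2 i).2.2 x y h2⟩
  left_inv f := by
    apply Subtype.ext
    funext v
    rcases v with z | ⟨i, x⟩
    · exact congrArg f.1 (congrArg Sum.inl (Subsingleton.elim 0 z))
    · rfl
  right_inv cg := by
    rcases cg with ⟨c, g⟩
    rfl

lemma twf_other {i : Fin n} (hia : i ≠ a) (hib : i ≠ b) (x y : Fin (k i)) :
    twf k a b (Sum.inr ⟨i, x⟩) (Sum.inr ⟨i, y⟩) = 1 := by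
  simp [twf, hia, hib]

lemma twf_aa (hab : a ≠ b) (x y : Fin (k a)) :
    twf k a b (Sum.inr ⟨a, x⟩) (Sum.inr ⟨a, y⟩) =
      if (x.val = 0 ∧ y.val = 1) ∨ (x.val = 1 ∧ y.val = 0) then Equiv.swap 0 1 else 1 := by
  simp [twf, hab]

lemma twf_bb (hab : a ≠ b) (x y : Fin (k b)) :
    twf k a b (Sum.inr ⟨b, x⟩) (Sum.inr ⟨b, y⟩) =
      if (x.val = 0 ∧ y.val = 1) ∨ (x.val = 1 ∧ y.val = 0) then Equiv.swap 2 3 else 1 := by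
  simp [twf, hab.symm]

lemma natCard_sigma {ι : Type} [Fintype ι] (β : ι → Type) [∀ i, Finite (β i)] :
    Nat.card (Σ i, β i) = ∑ i, Nat.card (β i) := by
  letI : ∀ i, Fintype (β i) := fun i => Fintype.ofFinite (β i)
  simp [Nat.card_eq_fintype_card, Fintype.card_sigma]

lemma card_decomp (t : (Fin 1 ⊕ Σ i : Fin n, Fin (k i)) → (Fin 1 ⊕ Σ i : Fin n, Fin (k i)) →
      Equiv.Perm (Fin 4))
    (ht1 : ∀ z w, t (Sum.inl z) w = 1) (ht2 : ∀ z w, t w (Sum.inl z) = 1) :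
    Nat.card {f : (Fin 1 ⊕ Σ i : Fin n, Fin (k i)) → Fin 4 //
      ∀ u v, (coneCycles k).Adj u v → f v ≠ t u v (f u)} =
    ∑ c : Fin 4, ∏ i : Fin n, Nat.card {g : Fin (k i) → Fin 4 //
      (∀ x, g x ≠ c) ∧ ∀ x y, (SimpleGraph.cycleGraph (k i)).Adj x y →
        g y ≠ t (Sum.inr ⟨i, x⟩) (Sum.inr ⟨i, y⟩) (g x)} := by
  rw [Nat.card_congr (decompEquiv k t ht1 ht2), natCard_sigma]
  refine Finset.sum_congr rfl fun c _ => ?_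
  rw [Nat.card_pi]

lemma countA (m : ℕ) (hm : m = 4) (c : Fin 4) :
    Nat.card {g : Fin m → Fin 4 // (∀ x, g x ≠ c) ∧ ∀ x y, (SimpleGraph.cycleGraph m).Adj x y →
      g y ≠ (if (x.val = 0 ∧ y.val = 1) ∨ (x.val = 1 ∧ y.val = 0)
        then Equiv.swap 0 1 else 1) (g x)} = if c.val ≤ 1 then 20 else 16 := by
  subst hm
  rw [Nat.card_eq_fintype_card]
  revert c
  decide

lemma countB (m : ℕ) (hm : m = 4) (c : Fin 4) :
    Nat.card {g : Fin m → Fin 4 // (∀ x, g x ≠ c) ∧ ∀ x y, (SimpleGraph.cycleGraph m).Adj x y →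
      g y ≠ (if (x.val = 0 ∧ y.val = 1) ∨ (x.val = 1 ∧ y.val = 0)
        then Equiv.swap 2 3 else 1) (g x)} = if c.val ≤ 1 then 16 else 20 := by
  subst hm
  rw [Nat.card_eq_fintype_card]
  revert c
  decide

lemma countPlain (m : ℕ) (hm : m = 4) (c : Fin 4) :
    Nat.card {g : Fin m → Fin 4 // (∀ x, g x ≠ c) ∧ ∀ x y, (SimpleGraph.cycleGraph m).Adj x y →
      g y ≠ (1 : Equiv.Perm (Fin 4)) (g x)} = 18 := by
  subst hm
  rw [Nat.card_eq_fintype_card]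
  revert c
  decide

lemma countPos (m : ℕ) (hm : 3 ≤ m) :
    0 < Nat.card {g : Fin m → Fin 4 // (∀ x, g x ≠ (0 : Fin 4)) ∧
      ∀ x y, (SimpleGraph.cycleGraph m).Adj x y → g y ≠ (1 : Equiv.Perm (Fin 4)) (g x)} := by
  have hm0 : 0 < m := by omega
  haveI : NeZero m := ⟨by omega⟩
  set g : Fin m → Fin 4 := fun x => if x.val % 2 = 1 then 2 else if x.val = m - 1 then 3 else 1
    with hg
  have hkey : ∀ u : Fin m, g u ≠ g (u + 1) := by
    intro u
    have h1v : ((1 : Fin m)).val = 1 := by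
      rw [Fin.val_one']
      exact Nat.mod_eq_of_lt (by omega)
    have hv : ((u + 1 : Fin m)).val = (u.val + 1) % m := by
      rw [Fin.val_add, h1v]
    have hu : u.val < m := u.isLt
    rcases Nat.lt_or_ge (u.val + 1) m with h1 | h1
    · have hv' : ((u + 1 : Fin m)).val = u.val + 1 := by rw [hv, Nat.mod_eq_of_lt h1]
      rw [hg]
      simp only [hv']
      split_ifs <;> first | decide | omega | (exfalso; omega) | (exact False.elim ‹False›)
    · have hm' : u.val + 1 = m := by omega
      have hv' : ((u + 1 : Fin m)).val = 0 := by rw [hv, hm', Nat.mod_self]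
      rw [hg]
      simp only [hv']
      split_ifs <;> first | decide | omega | (exfalso; omega) | (exact False.elim ‹False›)
  have hproper : ∀ x y : Fin m, (SimpleGraph.cycleGraph m).Adj x y →
      g y ≠ (1 : Equiv.Perm (Fin 4)) (g x) := by
    intro x y hxy
    rw [SimpleGraph.cycleGraph_adj'] at hxy
    have h1v : ((1 : Fin m)).val = 1 := by
      rw [Fin.val_one']
      exact Nat.mod_eq_of_lt (by omega)
    simp only [Equiv.Perm.one_apply]
    rcases hxy with h | h
    · have hx : x = y + 1 := by
        have h2 : x - y = 1 := by
          apply Fin.ext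
          rw [h, h1v]
        rw [← h2]
        abel
      rw [hx]
      exact hkey y
    · have hy : y = x + 1 := by
        have h2 : y - x = 1 := by
          apply Fin.ext
          rw [h, h1v]
        rw [← h2]
        abel
      rw [hy]
      exact (hkey x).symm
  have havoid : ∀ x, g x ≠ (0 : Fin 4) := by
    intro x
    rw [hg]
    dsimp only
    split_ifs <;> decide
  refine Nat.card_pos_iff.mpr ⟨⟨⟨g, havoid, hproper⟩⟩, ?_⟩
  exact Finite.of_injective (fun h => h.1) (fun h1 h2 hh => Subtype.ext hh)

theorem badCover_lt (hab : a ≠ b) (hka : k a = 4) (hkb : k b = 4) (hk : ∀ i, 3 ≤ k i) :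
    (badCover k a b).count < chromPoly (coneCycles k) 4 := by
  -- rewrite chromPoly as a twisted count with trivial twists
  have hchrom : chromPoly (coneCycles k) 4 =
      Nat.card {f : (Fin 1 ⊕ Σ i : Fin n, Fin (k i)) → Fin 4 //
        ∀ u v, (coneCycles k).Adj u v → f v ≠ (fun _ _ => (1 : Equiv.Perm (Fin 4))) u v (f u)} := by
    apply Nat.card_congr
    apply Equiv.subtypeEquivRight
    intro f
    constructor
    · intro h u v huv
      simpa [ne_comm] using h u v huv
    · intro h u v huv
      simpa [ne_comm] using h u v huv
  rw [hchrom, badCover_count,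
    card_decomp k (twf k a b) (twf_inl_left k a b) (twf_inl_right k a b),
    card_decomp k (fun _ _ => 1) (fun _ _ => rfl) (fun _ _ => rfl)]
  -- abbreviations
  set B : Fin n → Fin 4 → ℕ := fun i c => Nat.card {g : Fin (k i) → Fin 4 //
      (∀ x, g x ≠ c) ∧ ∀ x y, (SimpleGraph.cycleGraph (k i)).Adj x y →
        g y ≠ twf k a b (Sum.inr ⟨i, x⟩) (Sum.inr ⟨i, y⟩) (g x)} with hB
  set R : Fin n → Fin 4 → ℕ := fun i c => Nat.card {g : Fin (k i) → Fin 4 //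
      (∀ x, g x ≠ c) ∧ ∀ x y, (SimpleGraph.cycleGraph (k i)).Adj x y →
        g y ≠ (1 : Equiv.Perm (Fin 4)) (g x)} with hR
  have hBa : ∀ c, B a c = if c.val ≤ 1 then 20 else 16 := by
    intro c
    rw [hB, ← countA (k a) hka c]
    apply Nat.card_congr
    apply Equiv.subtypeEquivRight
    intro g
    constructor <;> intro h <;>
      exact ⟨h.1, fun x y hxy => by
        have := h.2 x y hxy
        first
          | rwa [twf_aa k a b hab] at this
          | rwa [← twf_aa k a b hab] at this⟩
  have hBb : ∀ c, B b c = if c.val ≤ 1 then 16 else 20 := by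
    intro c
    rw [hB, ← countB (k b) hkb c]
    apply Nat.card_congr
    apply Equiv.subtypeEquivRight
    intro g
    constructor <;> intro h <;>
      exact ⟨h.1, fun x y hxy => by
        have := h.2 x y hxy
        first
          | rwa [twf_bb k a b hab] at this
          | rwa [← twf_bb k a b hab] at this⟩
  have hBother : ∀ i, i ≠ a → i ≠ b → ∀ c, B i c = R i c := by
    intro i hia hib c
    rw [hB, hR]
    apply Nat.card_congr
    apply Equiv.subtypeEquivRight
    intro g
    constructor <;> intro h <;>
      exact ⟨h.1, fun x y hxy => by
        have := h.2 x y hxy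
        first
          | rwa [twf_other k a b hia hib] at this
          | rwa [← twf_other k a b hia hib] at this⟩
  have hRa : ∀ c, R a c = 18 := fun c => countPlain (k a) hka c
  have hRb : ∀ c, R b c = 18 := fun c => countPlain (k b) hkb c
  -- split the products at a and b
  have hbmem : b ∈ (univ : Finset (Fin n)).erase a := by
    simp [Finset.mem_erase, hab.symm]
  have hsplit : ∀ (F : Fin n → Fin 4 → ℕ) (c : Fin 4),
      ∏ i : Fin n, F i c = F a c * (F b c * ∏ i ∈ ((univ : Finset (Fin n)).erase a).erase b, F i c) := by
    intro F c
    rw [← Finset.mul_prod_erase univ (fun i => F i c) (Finset.mem_univ a),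
      ← Finset.mul_prod_erase _ (fun i => F i c) hbmem]
  have hprodeq : ∀ c, ∏ i ∈ ((univ : Finset (Fin n)).erase a).erase b, B i c =
      ∏ i ∈ ((univ : Finset (Fin n)).erase a).erase b, R i c := by
    intro c
    refine Finset.prod_congr rfl fun i hi => ?_
    simp only [Finset.mem_erase] at hi
    exact hBother i hi.2.1 hi.1 c
  apply Finset.sum_lt_sum
  · intro c _
    rw [hsplit B c, hsplit R c, hprodeq c, hBa, hBb, hRa, hRb, ← mul_assoc, ← mul_assoc]
    apply mul_le_mul_left
    split_ifs <;> norm_num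
  · refine ⟨0, Finset.mem_univ 0, ?_⟩
    rw [hsplit B 0, hsplit R 0, hprodeq 0, hBa, hBb, hRa, hRb, ← mul_assoc, ← mul_assoc]
    have hpos : 0 < ∏ i ∈ ((univ : Finset (Fin n)).erase a).erase b, R i 0 := by
      apply Finset.prod_pos
      intro i _
      rw [hR]
      exact countPos (k i) (hk i)
    have h01 : ((0 : Fin 4)).val ≤ 1 := by norm_num
    rw [if_pos h01, if_pos h01]
    exact mul_lt_mul_of_pos_right (by norm_num) hpos
  
end AuxDP


theorem stmt_19 {n : ℕ} (hn : 2 ≤ n) (k : Fin n → ℕ) (hk : ∀ i, 3 ≤ k i)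
    (h4 : ∃ a b : Fin n, a ≠ b ∧ k a = 4 ∧ k b = 4) :
    PDP (coneCycles k) 4 < chromPoly (coneCycles k) 4 ∧ (5 : ℕ∞) ≤ tauDP (coneCycles k) := by
  obtain ⟨a, b, hab, hka, hkb⟩ := h4
  have hlt : PDP (coneCycles k) 4 < chromPoly (coneCycles k) 4 := by
    refine lt_of_le_of_lt ?_ (badCover_lt k a b hab hka hkb hk)
    exact Nat.sInf_le ⟨badCover k a b, rfl⟩
  refine ⟨hlt, le_sInf ?_⟩
  rintro N ⟨m, rfl, hχ, hall⟩
  by_contra hcon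
  push_neg at hcon
  have hm4 : m ≤ 4 := by
    have : m < 5 := by exact_mod_cast hcon
    omega
  exact absurd (hall 4 hm4) hlt.ne
end
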